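/- (AMDCT V discrete orthogonality) Let N, n ≥ 1 and let k, k' ∈ D_N^−, i.e., k = (k_1,…,k_n) and k' = (k'_1,…,k'_n) are integer vectors with N−1 ≥ k_1 > k_2 > … > k_n ≥ 0 and N−1 ≥ k'_1 > k'_2 > … > k'_n ≥ 0. Then Σ_{r ∈ D_N^−} (∏_{i=1}^n c_{r_i}) · cos⁻_k(2r_1/(2N−1), …, 2r_n/(2N−1)) · cos⁻_{k'}(2r_1/(2N−1), …, 2r_n/(2N−1)) = d_k^{−1} · ((2N−1)/4)^n · δ_{k,k'}. -/

import Mathlib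

open Real Finset

/-- The antisymmetric multivariate cosine function
`cos⁻_λ(x) = Σ_{σ ∈ S_n} sgn(σ) ∏_{i=1}^n cos(π λ_{σ(i)} x_i)`. -/
noncomputable def cosMinus (n : ℕ) (lam x : Fin n → ℝ) : ℝ :=
  ∑ σ : Equiv.Perm (Fin n),
    ((Equiv.Perm.sign σ : ℤ) : ℝ) * ∏ i : Fin n, Real.cos (Real.pi * lam (σ i) * x i)

/-- The coefficient `c_r`: `1/2` if `r = 0` or `r = N`, and `1` otherwise. -/
noncomputable def cc (N r : ℕ) : ℝ := if r = 0 ∨ r = N then 1 / 2 else 1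

lemma sumZ (N : ℕ) (hN : 1 ≤ N) (z : ℂ) (hz1 : z ≠ 1) (hzM : z ^ (2*N-1) = 1) :
    ∑ r ∈ range N, (z ^ r + z⁻¹ ^ r) = 1 := by
  have key : ∀ r ∈ range N, z ^ r + z⁻¹ ^ r = z ^ r + z ^ (N + (N - 1 - r)) := by
    intro r hr
    rw [mem_range] at hr
    congr 1
    have h : z ^ (N + (N - 1 - r)) * z ^ r = 1 := by
      rw [← pow_add]
      have e : N + (N - 1 - r) + r = 2*N-1 := by omega
      rw [e, hzM]
    rw [inv_pow]
    exact inv_eq_of_mul_eq_one_left h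
  rw [Finset.sum_congr rfl key, Finset.sum_add_distrib]
  have hrefl : ∑ r ∈ range N, z ^ (N + (N - 1 - r)) = ∑ r ∈ range N, z ^ (N + r) :=
    Finset.sum_range_reflect (fun j => z ^ (N + j)) N
  rw [hrefl]
  have hsplit : ∑ r ∈ range N, z ^ r + ∑ r ∈ range N, z ^ (N + r) = ∑ r ∈ range (N + N), z ^ r := by
    rw [Finset.sum_range_add]
  rw [hsplit]
  have hNN : N + N = (2*N-1) + 1 := by omega
  rw [hNN, Finset.sum_range_succ, hzM, geom_sum_eq hz1, hzM]
  simp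

lemma Tsum (N : ℕ) (hN : 1 ≤ N) (m : ℤ) (hm2 : m.natAbs < 2*N - 1) :
    ∑ r : Fin N, cc N r * Real.cos (2 * Real.pi * m * r / (2*(N:ℝ) - 1))
      = if m = 0 then (2*(N:ℝ)-1)/2 else 0 := by
  have hN1 : (1:ℝ) ≤ (N:ℝ) := by exact_mod_cast hN
  have hM : (2*(N:ℝ) - 1) ≠ 0 := by linarith
  by_cases hm : m = 0
  · subst hm
    simp only [if_pos rfl]
    have h1 : ∀ r : Fin N, cc N r * Real.cos (2 * Real.pi * ((0:ℤ):ℝ) * r / (2*(N:ℝ) - 1)) = cc N r := by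
      intro r; norm_num
    rw [Finset.sum_congr rfl (fun r _ => h1 r)]
    have h2 : ∀ r : Fin N, cc N (r:ℕ) = 1 - (if (r:ℕ) = 0 then (1/2:ℝ) else 0) := by
      intro r
      have hrN : (r:ℕ) ≠ N := Nat.ne_of_lt r.isLt
      unfold cc
      by_cases h : (r:ℕ) = 0
      · rw [if_pos (Or.inl h), if_pos h]; norm_num
      · rw [if_neg (by tauto), if_neg h]; norm_num
    rw [Finset.sum_congr rfl (fun r _ => h2 r), Finset.sum_sub_distrib, Finset.sum_const,
      Fin.sum_univ_eq_sum_range (fun r => if r = 0 then (1/2:ℝ) else 0),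
      Finset.sum_ite_eq' (range N) 0 (fun _ => (1/2:ℝ))]
    rw [if_pos (mem_range.mpr (by omega : 0 < N))]
    simp only [Finset.card_univ, Fintype.card_fin, nsmul_eq_mul, mul_one]
    rw [if_true]
    ring
  · rw [if_neg hm]
    set θ : ℝ := 2 * Real.pi * m / (2*(N:ℝ) - 1) with hθ
    set z : ℂ := Complex.exp (θ * Complex.I) with hzdef
    have hzM : z ^ (2*N - 1) = 1 := by
      rw [hzdef, ← Complex.exp_nat_mul]
      have harg : ((2*N-1 : ℕ) : ℂ) * ((θ:ℝ) * Complex.I) = (m:ℂ) * (2 * (Real.pi:ℝ) * Complex.I) := by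
        have hval : ((2*N-1 : ℕ) : ℝ) = 2*(N:ℝ) - 1 := by
          push_cast [Nat.cast_sub (by omega : 1 ≤ 2*N)]; ring
        have hre : ((2*N-1 : ℕ) : ℝ) * θ = (m:ℝ) * (2 * Real.pi) := by
          rw [hval, hθ]; field_simp
        calc ((2*N-1 : ℕ) : ℂ) * ((θ:ℝ) * Complex.I)
            = ((((2*N-1 : ℕ) : ℝ) * θ : ℝ) : ℂ) * Complex.I := by push_cast; ring
          _ = (((m:ℝ) * (2 * Real.pi) : ℝ) : ℂ) * Complex.I := by rw [hre]
          _ = (m:ℂ) * (2 * (Real.pi:ℝ) * Complex.I) := by push_cast; ring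
      rw [harg, Complex.exp_int_mul_two_pi_mul_I]
    have hz1 : z ≠ 1 := by
      rw [hzdef, Ne, Complex.exp_eq_one_iff]
      rintro ⟨j, hj⟩
      have hj' : ((θ:ℝ) : ℂ) = ((j:ℝ) * (2 * Real.pi) : ℝ) := by
        apply mul_right_cancel₀ Complex.I_ne_zero
        rw [hj]; push_cast; ring
      have hjr : θ = (j:ℝ) * (2 * Real.pi) := by exact_mod_cast hj'
      rw [hθ] at hjr
      have hmj : (m:ℝ) = (j:ℝ) * (2*(N:ℝ) - 1) := by
        have hpi : Real.pi ≠ 0 := Real.pi_ne_zero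
        field_simp at hjr
        have h2pi : (2*Real.pi) ≠ 0 := by positivity
        apply mul_left_cancel₀ h2pi
        linear_combination (2*Real.pi) * hjr
      have hval : ((2*N-1 : ℕ) : ℝ) = 2*(N:ℝ) - 1 := by
        push_cast [Nat.cast_sub (by omega : 1 ≤ 2*N)]; ring
      rw [← hval] at hmj
      have hmj' : m = j * ((2*N-1 : ℕ) : ℤ) := by exact_mod_cast hmj
      have hj0 : j ≠ 0 := by rintro rfl; simp at hmj'; exact hm hmj'
      have : (2*N-1 : ℕ) ≤ m.natAbs := by
        rw [hmj', Int.natAbs_mul]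
        have : 1 ≤ j.natAbs := Int.natAbs_pos.mpr hj0
        simp only [Int.natAbs_natCast]
        nlinarith [this]
      omega
    have hsum := sumZ N hN z hz1 hzM
    have hre2 : ∀ r : ℕ, (z ^ r + z⁻¹ ^ r).re = 2 * Real.cos (r * θ) := by
      intro r
      have e1 : z ^ r = Complex.exp (((r * θ : ℝ) : ℂ) * Complex.I) := by
        rw [hzdef, ← Complex.exp_nat_mul]; push_cast; ring_nf
      have e2 : z⁻¹ ^ r = Complex.exp (((r * (-θ) : ℝ) : ℂ) * Complex.I) := by
        rw [hzdef, ← Complex.exp_neg, ← Complex.exp_nat_mul]; push_cast; ring_nf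
      rw [e1, e2, Complex.add_re, Complex.exp_ofReal_mul_I_re, Complex.exp_ofReal_mul_I_re]
      rw [show (r : ℝ) * -θ = -(r * θ) by ring, Real.cos_neg]
      ring
    have hpt : ∀ r ∈ range N,
        2 * (cc N r * Real.cos (2 * Real.pi * m * r / (2*(N:ℝ) - 1))) + (if r = 0 then (1:ℝ) else 0)
          = (z ^ r + z⁻¹ ^ r).re := by
      intro r hr
      rw [mem_range] at hr
      rw [hre2 r]
      have harg : 2 * Real.pi * (m:ℝ) * r / (2*(N:ℝ) - 1) = r * θ := by
        rw [hθ]; field_simp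
      rw [harg]
      by_cases h : r = 0
      · subst h
        norm_num [cc]
      · have hrN : r ≠ N := Nat.ne_of_lt hr
        simp [cc, h, hrN]
    have hsum2 : ∑ r ∈ range N,
        (2 * (cc N r * Real.cos (2 * Real.pi * m * r / (2*(N:ℝ) - 1))) + (if r = 0 then (1:ℝ) else 0)) = 1 := by
      rw [Finset.sum_congr rfl hpt]
      have : ∑ r ∈ range N, (z ^ r + z⁻¹ ^ r).re = (∑ r ∈ range N, (z ^ r + z⁻¹ ^ r)).re :=
        (Complex.re_sum _ _).symm
      rw [this, hsum, Complex.one_re]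
    rw [Finset.sum_add_distrib, ← Finset.mul_sum,
      Finset.sum_ite_eq' (range N) 0 (fun _ => (1:ℝ)), if_pos (by rw [mem_range]; omega)] at hsum2
    have : ∑ r ∈ range N, cc N r * Real.cos (2 * Real.pi * m * r / (2*(N:ℝ) - 1)) = 0 := by linarith
    rw [Fin.sum_univ_eq_sum_range (fun r => cc N r * Real.cos (2 * Real.pi * m * r / (2*(N:ℝ) - 1)))]
    exact this

lemma oneD (N : ℕ) (hN : 1 ≤ N) (a b : ℕ) (ha : a < N) (hb : b < N) :
    ∑ r : Fin N, cc N r * Real.cos (Real.pi * a * (2 * (r:ℝ) / (2*(N:ℝ)-1)))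
        * Real.cos (Real.pi * b * (2 * (r:ℝ) / (2*(N:ℝ)-1)))
      = if a = b then (cc N a)⁻¹ * ((2*(N:ℝ)-1)/4) else 0 := by
  have hN1 : (1:ℝ) ≤ (N:ℝ) := by exact_mod_cast hN
  have hM : (2*(N:ℝ) - 1) ≠ 0 := by linarith
  have key : ∀ r : Fin N,
      cc N r * Real.cos (Real.pi * a * (2 * (r:ℝ) / (2*(N:ℝ)-1)))
        * Real.cos (Real.pi * b * (2 * (r:ℝ) / (2*(N:ℝ)-1)))
      = (cc N r * Real.cos (2 * Real.pi * (((a:ℤ)+b : ℤ) : ℝ) * r / (2*(N:ℝ) - 1))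
        + cc N r * Real.cos (2 * Real.pi * (((a:ℤ)-b : ℤ) : ℝ) * r / (2*(N:ℝ) - 1))) / 2 := by
    intro r
    have hcos : ∀ X Y : ℝ, Real.cos X * Real.cos Y = (Real.cos (X+Y) + Real.cos (X-Y))/2 := by
      intro X Y; rw [Real.cos_add, Real.cos_sub]; ring
    rw [mul_assoc, hcos]
    have e1 : Real.pi * a * (2 * (r:ℝ) / (2*(N:ℝ)-1)) + Real.pi * b * (2 * (r:ℝ) / (2*(N:ℝ)-1))
        = 2 * Real.pi * (((a:ℤ)+b : ℤ) : ℝ) * r / (2*(N:ℝ) - 1) := by push_cast; field_simp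
    have e2 : Real.pi * a * (2 * (r:ℝ) / (2*(N:ℝ)-1)) - Real.pi * b * (2 * (r:ℝ) / (2*(N:ℝ)-1))
        = 2 * Real.pi * (((a:ℤ)-b : ℤ) : ℝ) * r / (2*(N:ℝ) - 1) := by push_cast; field_simp
    rw [e1, e2]; ring
  rw [Finset.sum_congr rfl (fun r _ => key r)]
  rw [show (fun r : Fin N => (cc N r * Real.cos (2 * Real.pi * (((a:ℤ)+b : ℤ) : ℝ) * r / (2*(N:ℝ) - 1))
        + cc N r * Real.cos (2 * Real.pi * (((a:ℤ)-b : ℤ) : ℝ) * r / (2*(N:ℝ) - 1))) / 2)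
      = fun r : Fin N => (cc N r * Real.cos (2 * Real.pi * (((a:ℤ)+b : ℤ) : ℝ) * r / (2*(N:ℝ) - 1))
        + cc N r * Real.cos (2 * Real.pi * (((a:ℤ)-b : ℤ) : ℝ) * r / (2*(N:ℝ) - 1))) / 2 from rfl]
  rw [← Finset.sum_div, Finset.sum_add_distrib,
    Tsum N hN ((a:ℤ)+b) (by omega), Tsum N hN ((a:ℤ)-b) (by omega)]
  by_cases hab : a = b
  · subst hab
    rw [if_pos (rfl : a = a), if_pos (show (a:ℤ) - a = 0 by ring)]
    by_cases ha0 : a = 0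
    · subst ha0
      rw [if_pos (show ((0:ℕ):ℤ) + ((0:ℕ):ℤ) = 0 by norm_num)]
      have hcc : cc N 0 = 1/2 := by unfold cc; rw [if_pos (Or.inl rfl)]
      rw [hcc]
      norm_num
      ring
    · rw [if_neg (show ¬((a:ℤ) + a = 0) by omega)]
      have hcc : cc N a = 1 := by
        unfold cc; rw [if_neg (by omega)]
      rw [hcc]
      norm_num
      ring
  · rw [if_neg hab, if_neg (show ¬((a:ℤ)+b = 0) by omega), if_neg (show ¬((a:ℤ)-b = 0) by omega)]
    norm_num

lemma cosMinus_comp (n : ℕ) (lam x : Fin n → ℝ) (e : Equiv.Perm (Fin n)) :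
    cosMinus n lam (x ∘ e) = ((Equiv.Perm.sign e : ℤ) : ℝ) * cosMinus n lam x := by
  unfold cosMinus
  rw [Finset.mul_sum]
  refine Fintype.sum_equiv (Equiv.mulRight e⁻¹) _ _ ?_
  intro τ
  simp only [Equiv.coe_mulRight]
  have hs : ((Equiv.Perm.sign (τ * e⁻¹) : ℤ) : ℝ)
      = ((Equiv.Perm.sign e : ℤ) : ℝ) * ((Equiv.Perm.sign τ : ℤ) : ℝ) := by
    rw [Equiv.Perm.sign_mul, Equiv.Perm.sign_inv]
    push_cast
    ring
  rw [hs]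
  have hp : ∏ i : Fin n, Real.cos (Real.pi * lam (τ i) * (x ∘ e) i)
      = ∏ i : Fin n, Real.cos (Real.pi * lam ((τ * e⁻¹) i) * x i) := by
    have := Equiv.prod_comp e (fun i => Real.cos (Real.pi * lam ((τ * e⁻¹) i) * x i))
    rw [← this]
    apply Finset.prod_congr rfl
    intro i _
    simp [Equiv.Perm.mul_apply]
  rw [hp]
  rcases Int.units_eq_one_or (Equiv.Perm.sign e) with h | h <;> rw [h] <;> push_cast <;> ring

lemma cosMinus_eq_zero {n : ℕ} (lam x : Fin n → ℝ) {i j : Fin n} (hij : i ≠ j)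
    (hx : x i = x j) : cosMinus n lam x = 0 := by
  have hxe : x ∘ (Equiv.swap i j) = x := by
    funext t
    rcases eq_or_ne t i with rfl | hti
    · simp [Equiv.swap_apply_left, hx.symm]
    · rcases eq_or_ne t j with rfl | htj
      · simp [Equiv.swap_apply_right, hx]
      · simp [Equiv.swap_apply_of_ne_of_ne hti htj]
  have h := cosMinus_comp n lam x (Equiv.swap i j)
  rw [hxe, Equiv.Perm.sign_swap hij] at h
  push_cast at h
  linarith

lemma strictAnti_perm_eq {α : Type*} [LinearOrder α] {n : ℕ} {f g : Fin n → α}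
    (hf : StrictAnti f) (hg : StrictAnti g) (e : Equiv.Perm (Fin n)) (h : f = g ∘ e) : f = g := by
  have hrev : StrictAnti (Fin.rev : Fin n → Fin n) := fun a b hab => Fin.rev_lt_rev.mpr hab
  have hF : StrictMono (f ∘ Fin.rev) := fun a b hab => hf (hrev hab)
  have hG : StrictMono (g ∘ Fin.rev) := fun a b hab => hg (hrev hab)
  set s : Finset α := Finset.image g Finset.univ with hs
  have hcard : s.card = n := by
    rw [hs, Finset.card_image_of_injective _ hg.injective, Finset.card_univ, Fintype.card_fin]
  have hFmem : ∀ t : Fin n, (f ∘ Fin.rev) t ∈ s := by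
    intro t
    rw [h]
    exact Finset.mem_image_of_mem g (Finset.mem_univ _)
  have hGmem : ∀ t : Fin n, (g ∘ Fin.rev) t ∈ s := by
    intro t; exact Finset.mem_image_of_mem g (Finset.mem_univ _)
  have hFe := Finset.orderEmbOfFin_unique hcard hFmem hF
  have hGe := Finset.orderEmbOfFin_unique hcard hGmem hG
  funext t
  have : (f ∘ Fin.rev) t.rev = (g ∘ Fin.rev) t.rev := by rw [hFe, hGe]
  simpa [Fin.rev_rev] using this

lemma sum_decomp {n N : ℕ} (F : (Fin n → Fin N) → ℝ)
    (hperm : ∀ (r : Fin n → Fin N) (e : Equiv.Perm (Fin n)), F (r ∘ e) = F r)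
    (hzero : ∀ r : Fin n → Fin N, ¬Function.Injective r → F r = 0) :
    ∑ r : Fin n → Fin N, F r
      = (n.factorial : ℝ) *
        ∑ r ∈ Finset.univ.filter (fun r : Fin n → Fin N => StrictAnti r), F r := by
  classical
  rw [← Finset.sum_filter_add_sum_filter_not Finset.univ Function.Injective F]
  have h2 : ∑ r ∈ Finset.univ.filter (fun r : Fin n → Fin N => ¬Function.Injective r), F r = 0 :=
    Finset.sum_eq_zero (fun r hr => hzero r (Finset.mem_filter.mp hr).2)
  rw [h2, add_zero]
  -- bijection with (decreasing) × perms
  have key : ∑ p ∈ (Finset.univ.filter (fun r : Fin n → Fin N => StrictAnti r)) ×ˢ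
        (Finset.univ : Finset (Equiv.Perm (Fin n))), F (p.1 ∘ p.2)
      = ∑ r ∈ Finset.univ.filter (fun r : Fin n → Fin N => Function.Injective r), F r := by
    refine Finset.sum_nbij' (fun p => p.1 ∘ p.2)
      (fun r => (r ∘ ⇑(Tuple.sort r * (Fin.revPerm : Equiv.Perm (Fin n))),
        (Tuple.sort r * (Fin.revPerm : Equiv.Perm (Fin n)))⁻¹)) ?_ ?_ ?_ ?_ ?_
    · rintro ⟨s, e⟩ hp
      rw [Finset.mem_product, Finset.mem_filter] at hp
      rw [Finset.mem_filter]
      exact ⟨Finset.mem_univ _, (hp.1.2.injective).comp e.injective⟩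
    · intro r hr
      rw [Finset.mem_filter] at hr
      rw [Finset.mem_product, Finset.mem_filter]
      refine ⟨⟨Finset.mem_univ _, ?_⟩, Finset.mem_univ _⟩
      -- r ∘ (sort r * revPerm) is strictly decreasing
      have hmono : Monotone (r ∘ ⇑(Tuple.sort r)) := Tuple.monotone_sort r
      have hinj : Function.Injective (r ∘ ⇑(Tuple.sort r)) :=
        hr.2.comp (Tuple.sort r).injective
      have hsm : StrictMono (r ∘ ⇑(Tuple.sort r)) := hmono.strictMono_of_injective hinj
      intro a b hab
      have : Fin.rev b < Fin.rev a := Fin.rev_lt_rev.mpr hab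
      exact hsm this
    · rintro ⟨s, e⟩ hp
      rw [Finset.mem_product, Finset.mem_filter] at hp
      have hs : StrictAnti s := hp.1.2
      set r : Fin n → Fin N := s ∘ e with hrdef
      set τ : Equiv.Perm (Fin n) := Tuple.sort r * (Fin.revPerm : Equiv.Perm (Fin n)) with hτ
      have hrinj : Function.Injective r := hs.injective.comp e.injective
      have hanti : StrictAnti (r ∘ ⇑τ) := by
        have hmono : Monotone (r ∘ ⇑(Tuple.sort r)) := Tuple.monotone_sort r
        have hsm : StrictMono (r ∘ ⇑(Tuple.sort r)) :=
          hmono.strictMono_of_injective (hrinj.comp (Tuple.sort r).injective)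
        intro a b hab
        have : Fin.rev b < Fin.rev a := Fin.rev_lt_rev.mpr hab
        exact hsm this
      have hcomp : r ∘ ⇑τ = s ∘ ⇑(e * τ) := by
        funext t; simp [hrdef, Equiv.Perm.mul_apply]
      have heq : r ∘ ⇑τ = s := strictAnti_perm_eq hanti hs (e * τ) hcomp
      have hperm_eq : τ⁻¹ = e := by
        apply Equiv.Perm.ext
        intro t
        apply hs.injective
        have h1 : s (τ⁻¹ t) = (r ∘ ⇑τ) (τ⁻¹ t) := by rw [heq]
        have h2 : (r ∘ ⇑τ) (τ⁻¹ t) = r t := by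
          simp [Function.comp, Equiv.Perm.inv_def]
        rw [h1, h2, hrdef]
        rfl
      simp only [Prod.mk.injEq]
      exact ⟨heq, hperm_eq⟩
    · intro r hr
      funext t
      simp [Function.comp, Equiv.Perm.inv_def]
    · rintro ⟨s, e⟩ _
      rfl
  rw [← key, Finset.sum_product]
  have : ∀ s ∈ Finset.univ.filter (fun r : Fin n → Fin N => StrictAnti r),
      ∑ e : Equiv.Perm (Fin n), F (s ∘ e) = (n.factorial : ℝ) * F s := by
    intro s _
    rw [Finset.sum_congr rfl (fun e _ => hperm s e), Finset.sum_const, Finset.card_univ,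
      Fintype.card_perm, Fintype.card_fin, nsmul_eq_mul]
  rw [Finset.sum_congr rfl this, ← Finset.mul_sum]


theorem AMDCT_V_orthogonality (n N : ℕ) (hn : 1 ≤ n) (hN : 1 ≤ N)
    (k k' : Fin n → ℕ)
    (hk : ∀ i j : Fin n, i < j → k j < k i) (hkb : ∀ i, k i ≤ N - 1)
    (hk' : ∀ i j : Fin n, i < j → k' j < k' i) (hk'b : ∀ i, k' i ≤ N - 1) :
    ∑ r ∈ Finset.univ.filter
        (fun r : Fin n → Fin N => ∀ i j : Fin n, i < j → (r j : ℕ) < (r i : ℕ)),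
      (∏ i : Fin n, cc N (r i)) *
        cosMinus n (fun i => (k i : ℝ))
          (fun i => 2 * ((r i : ℕ) : ℝ) / (2 * N - 1)) *
        cosMinus n (fun i => (k' i : ℝ))
          (fun i => 2 * ((r i : ℕ) : ℝ) / (2 * N - 1))
      = (∏ i : Fin n, cc N (k i))⁻¹ * ((2 * (N : ℝ) - 1) / 4) ^ n *
          (if k = k' then (1 : ℝ) else 0) := by
  classical
  have hN1 : (1:ℝ) ≤ (N:ℝ) := by exact_mod_cast hN
  have hkS : StrictAnti k := fun i j h => hk i j h
  have hk'S : StrictAnti k' := fun i j h => hk' i j h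
  have hkb' : ∀ i, k i < N := fun i => by have := hkb i; omega
  have hk'b' : ∀ i, k' i < N := fun i => by have := hk'b i; omega
  set F : (Fin n → Fin N) → ℝ := fun r =>
    (∏ i : Fin n, cc N (r i)) *
      cosMinus n (fun i => (k i : ℝ)) (fun i => 2 * ((r i : ℕ) : ℝ) / (2 * N - 1)) *
      cosMinus n (fun i => (k' i : ℝ)) (fun i => 2 * ((r i : ℕ) : ℝ) / (2 * N - 1)) with hF
  have hperm : ∀ (r : Fin n → Fin N) (e : Equiv.Perm (Fin n)), F (r ∘ e) = F r := by
    intro r e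
    rw [hF]
    simp only
    have h1 : (∏ i : Fin n, cc N ((r ∘ e) i)) = ∏ i : Fin n, cc N (r i) :=
      Equiv.prod_comp e (fun i => cc N (r i))
    have hx : (fun i => 2 * (((r ∘ e) i : ℕ) : ℝ) / (2 * (N:ℝ) - 1))
        = (fun i => 2 * ((r i : ℕ) : ℝ) / (2 * (N:ℝ) - 1)) ∘ e := rfl
    rw [h1, hx, cosMinus_comp, cosMinus_comp]
    rcases Int.units_eq_one_or (Equiv.Perm.sign e) with h | h <;> rw [h] <;> push_cast <;> ring
  have hzero : ∀ r : Fin n → Fin N, ¬Function.Injective r → F r = 0 := by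
    intro r hinj
    rw [Function.not_injective_iff] at hinj
    obtain ⟨a, b, hab, hne⟩ := hinj
    have hx : (fun i => 2 * ((r i : ℕ) : ℝ) / (2 * (N:ℝ) - 1)) a
        = (fun i => 2 * ((r i : ℕ) : ℝ) / (2 * (N:ℝ) - 1)) b := by simp [hab]
    rw [hF]
    simp only
    rw [cosMinus_eq_zero _ _ hne hx]
    ring
  have hfilter : (Finset.univ.filter
        (fun r : Fin n → Fin N => ∀ i j : Fin n, i < j → (r j : ℕ) < (r i : ℕ)))
      = Finset.univ.filter (fun r : Fin n → Fin N => StrictAnti r) := by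
    apply Finset.filter_congr
    intro r _
    constructor
    · intro h a b hab
      exact Fin.lt_def.mpr (h a b hab)
    · intro h a b hab
      exact Fin.lt_def.mp (h hab)
  have hdecomp := sum_decomp F hperm hzero
  -- expansion of the full sum
  have expand : ∑ r : Fin n → Fin N, F r
      = (n.factorial : ℝ) * ((∏ i : Fin n, cc N (k i))⁻¹ * ((2 * (N : ℝ) - 1) / 4) ^ n *
          (if k = k' then (1 : ℝ) else 0)) := by
    have stepA : ∀ r : Fin n → Fin N, F r
        = ∑ σ : Equiv.Perm (Fin n), ∑ τ : Equiv.Perm (Fin n),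
            (((Equiv.Perm.sign σ : ℤ) : ℝ) * ((Equiv.Perm.sign τ : ℤ) : ℝ)) *
            ∏ i : Fin n, (cc N (r i)
              * Real.cos (Real.pi * (k (σ i) : ℝ) * (2 * ((r i : ℕ) : ℝ) / (2 * (N:ℝ) - 1)))
              * Real.cos (Real.pi * (k' (τ i) : ℝ) * (2 * ((r i : ℕ) : ℝ) / (2 * (N:ℝ) - 1)))) := by
      intro r
      rw [hF]
      simp only
      unfold cosMinus
      rw [mul_assoc, Finset.sum_mul_sum, Finset.mul_sum]
      refine Finset.sum_congr rfl (fun σ _ => ?_)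
      rw [Finset.mul_sum]
      refine Finset.sum_congr rfl (fun τ _ => ?_)
      rw [Finset.prod_mul_distrib, Finset.prod_mul_distrib]
      ring
    rw [Finset.sum_congr rfl (fun r _ => stepA r)]
    rw [Finset.sum_comm]
    rw [Finset.sum_congr rfl (fun σ _ => Finset.sum_comm)]
    have stepC : ∀ σ τ : Equiv.Perm (Fin n),
        ∑ r : Fin n → Fin N,
          (((Equiv.Perm.sign σ : ℤ) : ℝ) * ((Equiv.Perm.sign τ : ℤ) : ℝ)) *
            ∏ i : Fin n, (cc N (r i)
              * Real.cos (Real.pi * (k (σ i) : ℝ) * (2 * ((r i : ℕ) : ℝ) / (2 * (N:ℝ) - 1)))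
              * Real.cos (Real.pi * (k' (τ i) : ℝ) * (2 * ((r i : ℕ) : ℝ) / (2 * (N:ℝ) - 1))))
        = (((Equiv.Perm.sign σ : ℤ) : ℝ) * ((Equiv.Perm.sign τ : ℤ) : ℝ)) *
            (if (∀ i ∈ (Finset.univ : Finset (Fin n)), k (σ i) = k' (τ i))
              then ∏ i : Fin n, ((cc N (k (σ i)))⁻¹ * ((2 * (N:ℝ) - 1) / 4)) else 0) := by
      intro σ τ
      rw [← Finset.mul_sum]
      congr 1
      have hswap : ∑ r : Fin n → Fin N,
          ∏ i : Fin n, (cc N (r i)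
              * Real.cos (Real.pi * (k (σ i) : ℝ) * (2 * ((r i : ℕ) : ℝ) / (2 * (N:ℝ) - 1)))
              * Real.cos (Real.pi * (k' (τ i) : ℝ) * (2 * ((r i : ℕ) : ℝ) / (2 * (N:ℝ) - 1))))
          = ∏ i : Fin n, ∑ t : Fin N, (cc N t
              * Real.cos (Real.pi * (k (σ i) : ℝ) * (2 * ((t : ℕ) : ℝ) / (2 * (N:ℝ) - 1)))
              * Real.cos (Real.pi * (k' (τ i) : ℝ) * (2 * ((t : ℕ) : ℝ) / (2 * (N:ℝ) - 1)))) := by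
        rw [Finset.prod_univ_sum, Fintype.piFinset_univ]
      rw [hswap]
      have h1 : ∀ i : Fin n, ∑ t : Fin N, (cc N t
              * Real.cos (Real.pi * (k (σ i) : ℝ) * (2 * ((t : ℕ) : ℝ) / (2 * (N:ℝ) - 1)))
              * Real.cos (Real.pi * (k' (τ i) : ℝ) * (2 * ((t : ℕ) : ℝ) / (2 * (N:ℝ) - 1))))
          = if k (σ i) = k' (τ i) then (cc N (k (σ i)))⁻¹ * ((2 * (N:ℝ) - 1) / 4) else 0 :=
        fun i => oneD N hN (k (σ i)) (k' (τ i)) (hkb' _) (hk'b' _)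
      rw [Finset.prod_congr rfl (fun i _ => h1 i), Finset.prod_ite_zero]
      split_ifs <;> rfl
    rw [Finset.sum_congr rfl (fun σ _ => Finset.sum_congr rfl (fun τ _ => stepC σ τ))]
    by_cases hkk : k = k'
    · subst hkk
      rw [if_pos rfl]
      have hcond : ∀ σ τ : Equiv.Perm (Fin n),
          (∀ i ∈ (Finset.univ : Finset (Fin n)), k (σ i) = k (τ i)) ↔ σ = τ := by
        intro σ τ
        constructor
        · intro h
          exact Equiv.ext (fun t => hkS.injective (h t (Finset.mem_univ t)))
        · rintro rfl
          exact fun i _ => rfl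
      have hrw : ∀ σ τ : Equiv.Perm (Fin n),
          (((Equiv.Perm.sign σ : ℤ) : ℝ) * ((Equiv.Perm.sign τ : ℤ) : ℝ)) *
            (if (∀ i ∈ (Finset.univ : Finset (Fin n)), k (σ i) = k (τ i))
              then ∏ i : Fin n, ((cc N (k (σ i)))⁻¹ * ((2 * (N:ℝ) - 1) / 4)) else 0)
          = if σ = τ then (((Equiv.Perm.sign σ : ℤ) : ℝ) * ((Equiv.Perm.sign τ : ℤ) : ℝ)) *
              ∏ i : Fin n, ((cc N (k (σ i)))⁻¹ * ((2 * (N:ℝ) - 1) / 4)) else 0 := by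
        intro σ τ
        by_cases h : σ = τ
        · rw [if_pos ((hcond σ τ).mpr h), if_pos h]
        · rw [if_neg (fun hc => h ((hcond σ τ).mp hc)), if_neg h, mul_zero]
      rw [Finset.sum_congr rfl (fun σ _ => Finset.sum_congr rfl (fun τ _ => hrw σ τ))]
      have hinner : ∀ σ : Equiv.Perm (Fin n),
          ∑ τ : Equiv.Perm (Fin n), (if σ = τ then
              (((Equiv.Perm.sign σ : ℤ) : ℝ) * ((Equiv.Perm.sign τ : ℤ) : ℝ)) *
              ∏ i : Fin n, ((cc N (k (σ i)))⁻¹ * ((2 * (N:ℝ) - 1) / 4)) else 0)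
          = (∏ i : Fin n, cc N (k i))⁻¹ * ((2 * (N:ℝ) - 1) / 4) ^ n := by
        intro σ
        rw [Finset.sum_ite_eq Finset.univ σ, if_pos (Finset.mem_univ σ)]
        have hsgn : (((Equiv.Perm.sign σ : ℤ) : ℝ) * ((Equiv.Perm.sign σ : ℤ) : ℝ)) = 1 := by
          rcases Int.units_eq_one_or (Equiv.Perm.sign σ) with h | h <;> rw [h] <;> norm_num
        rw [hsgn, one_mul, Finset.prod_mul_distrib, Finset.prod_const, Finset.card_univ,
          Fintype.card_fin]
        congr 1
        rw [Equiv.prod_comp σ (fun i => (cc N (k i))⁻¹), Finset.prod_inv_distrib]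
      rw [Finset.sum_congr rfl (fun σ _ => hinner σ), Finset.sum_const, Finset.card_univ,
        Fintype.card_perm, Fintype.card_fin, nsmul_eq_mul]
      ring
    · rw [if_neg hkk]
      have hfalse : ∀ σ τ : Equiv.Perm (Fin n),
          ¬(∀ i ∈ (Finset.univ : Finset (Fin n)), k (σ i) = k' (τ i)) := by
        intro σ τ h
        apply hkk
        have hcomp : k = k' ∘ ⇑(σ.symm.trans τ) := by
          funext t
          have h2 := h (σ.symm t) (Finset.mem_univ _)
          rw [Equiv.apply_symm_apply] at h2
          exact h2
        exact strictAnti_perm_eq hkS hk'S (σ.symm.trans τ) hcomp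
      have : ∀ σ τ : Equiv.Perm (Fin n),
          (((Equiv.Perm.sign σ : ℤ) : ℝ) * ((Equiv.Perm.sign τ : ℤ) : ℝ)) *
            (if (∀ i ∈ (Finset.univ : Finset (Fin n)), k (σ i) = k' (τ i))
              then ∏ i : Fin n, ((cc N (k (σ i)))⁻¹ * ((2 * (N:ℝ) - 1) / 4)) else 0) = 0 := by
        intro σ τ
        rw [if_neg (hfalse σ τ), mul_zero]
      rw [Finset.sum_congr rfl (fun σ _ => Finset.sum_congr rfl (fun τ _ => this σ τ))]
      simp
  have hfact : (n.factorial : ℝ) ≠ 0 := by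
    exact_mod_cast Nat.factorial_ne_zero n
  apply mul_left_cancel₀ hfact
  rw [hfilter, ← hdecomp, expand]
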